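/- Let p ≥ 1 be an integer, let J ⊂ ℝ be an interval, and let g : ℝ → ℝ be p-times differentiable on J with |g^{(p)}(τ)| ≥ d for all τ ∈ J, where d > 0. Then for every h > 0 the Lebesgue measure of the set J_h = { τ ∈ J : |g(τ)| < h } satisfies mes(J_h) ≤ M h^{1/p}, where M = 2(2 + 3 + ⋯ + p + d^{−1}) (the sum 2 + ⋯ + p being empty when p = 1). -/

import Mathlib

open MeasureTheory Set

lemma my_idw_congr_set {n : ℕ} {f : ℝ → ℝ} {s t : Set ℝ} {x : ℝ}
    (h : s =ᶠ[nhds x] t) : iteratedDerivWithin n f s x = iteratedDerivWithin n f t x := by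
  simp only [iteratedDerivWithin, iteratedFDerivWithin_congr_set h]

lemma my_idw_of_isOpen {n : ℕ} {f : ℝ → ℝ} {s : Set ℝ} {x : ℝ}
    (hs : IsOpen s) (hx : x ∈ s) : iteratedDerivWithin n f s x = iteratedDeriv n f x := by
  simp only [iteratedDerivWithin, iteratedDeriv, iteratedFDerivWithin_of_isOpen n hs hx]

lemma my_idw_global {n : ℕ} {f : ℝ → ℝ} {J U : Set ℝ} {x : ℝ}
    (hU : IsOpen U) (hUJ : U ⊆ J) (hx : x ∈ U) :
    iteratedDerivWithin n f J x = iteratedDeriv n f x := by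
  rw [← my_idw_of_isOpen hU hx]
  refine my_idw_congr_set ?_
  filter_upwards [hU.mem_nhds hx] with y hy
  simp only [eq_iff_iff]
  exact ⟨fun _ => hy, fun _ => hUJ hy⟩

lemma my_contDiff_polyeval (P : Polynomial ℝ) {n : WithTop ℕ∞} :
    ContDiff ℝ n (fun t : ℝ => P.eval t) := by
  induction P using Polynomial.induction_on with
  | C a => simpa using contDiff_const (c := a)
  | add p q hp hq => simpa [Polynomial.eval_add] using hp.add hq
  | monomial m a ih =>
    simp only [Polynomial.eval_mul, Polynomial.eval_C, Polynomial.eval_pow, Polynomial.eval_X]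
    exact contDiff_const.mul (contDiff_id.pow _)

lemma my_iteratedDeriv_polyeval (n : ℕ) : ∀ (P : Polynomial ℝ),
    iteratedDeriv n (fun t => P.eval t) = fun t => ((Polynomial.derivative)^[n] P).eval t := by
  induction n with
  | zero => intro P; simp [iteratedDeriv_zero]
  | succ n ih =>
    intro P
    rw [iteratedDeriv_succ']
    have : deriv (fun t => P.eval t) = fun t => (Polynomial.derivative P).eval t :=
      funext fun t => Polynomial.deriv P
    rw [this, ih, Function.iterate_succ_apply]

lemma my_iteratedDeriv_poly_top (P : Polynomial ℝ) (k : ℕ) (hdeg : P.natDegree ≤ k) (t : ℝ) :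
    iteratedDeriv k (fun t => P.eval t) t = (Nat.factorial k : ℝ) * P.coeff k := by
  rw [my_iteratedDeriv_polyeval]
  have h0 : (Polynomial.derivative^[k] P).natDegree = 0 :=
    le_antisymm ((Polynomial.natDegree_iterate_derivative P k).trans (by omega)) (Nat.zero_le _)
  rw [Polynomial.eq_C_of_natDegree_le_zero h0.le]
  simp only [Polynomial.eval_C, Polynomial.coeff_iterate_derivative]
  simp [Nat.descFactorial_self, nsmul_eq_mul]

lemma my_gap_mono (x : ℕ → ℝ) (γ : ℝ) (k : ℕ) (hγ : 0 ≤ γ) (hgap : ∀ i < k, x i + γ ≤ x (i + 1)) :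
    ∀ j ≤ k, ∀ i < j, x i + γ ≤ x j := by
  intro j
  induction j with
  | zero => omega
  | succ j ih =>
    intro hj i hi
    rcases Nat.lt_or_ge i j with hij | hij
    · have h1 := ih (by omega) i hij
      have h2 := hgap j (by omega)
      linarith [h1, h2]
    · have : i = j := by omega
      subst this
      exact hgap i (by omega)

lemma my_rolle : ∀ n, 1 ≤ n → ∀ (F : ℝ → ℝ) (x : ℕ → ℝ),
    (∀ i < n, x i < x (i + 1)) → (∀ i ≤ n, F (x i) = 0) →
    ContinuousOn F (Icc (x 0) (x n)) → ContDiffOn ℝ n F (Ioo (x 0) (x n)) →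
    ∃ ξ ∈ Ioo (x 0) (x n), iteratedDeriv n F ξ = 0 := by
  intro n hn
  induction n, hn using Nat.le_induction with
  | base =>
    intro F x hlt hz hcont _
    obtain ⟨c, hc, hc0⟩ := exists_deriv_eq_zero (hlt 0 (by omega)) hcont
      ((hz 0 (by omega)).trans (hz 1 (by omega)).symm)
    exact ⟨c, hc, by rwa [iteratedDeriv_one]⟩
  | succ n hn IH =>
    intro F x hlt hz hcont hcd
    have mono : ∀ j ≤ n + 1, ∀ i ≤ j, x i ≤ x j := by
      intro j
      induction j with
      | zero =>
        intro _ i hi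
        have : i = 0 := by omega
        subst this; exact le_rfl
      | succ j ih =>
        intro hj i hi
        rcases Nat.lt_or_ge i (j + 1) with hij | hij
        · exact le_trans (ih (by omega) i (by omega)) (le_of_lt (hlt j (by omega)))
        · have : i = j + 1 := by omega
          subst this; exact le_rfl
    have hcex : ∀ i, ∃ c, i ≤ n → (x i < c ∧ c < x (i + 1) ∧ deriv F c = 0) := by
      intro i
      by_cases hi : i ≤ n
      · obtain ⟨c, hmem, hc0⟩ := exists_deriv_eq_zero (hlt i (by omega))
          (hcont.mono (Icc_subset_Icc (mono i (by omega) 0 (by omega))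
            (mono (n + 1) le_rfl (i + 1) (by omega))))
          ((hz i (by omega)).trans (hz (i + 1) (by omega)).symm)
        exact ⟨c, fun _ => ⟨hmem.1, hmem.2, hc0⟩⟩
      · exact ⟨0, fun h => absurd h hi⟩
    choose c hc using hcex
    have hV : Icc (c 0) (c n) ⊆ Ioo (x 0) (x (n + 1)) := by
      intro y hy
      constructor
      · exact lt_of_lt_of_le (hc 0 (by omega)).1 hy.1
      · exact lt_of_le_of_lt hy.2 (hc n le_rfl).2.1
    have hdF : ContDiffOn ℝ n (deriv F) (Ioo (x 0) (x (n + 1))) := by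
      refine hcd.deriv_of_isOpen isOpen_Ioo ?_
      exact_mod_cast le_rfl
    obtain ⟨ξ, hξ, h0⟩ := IH (deriv F) c
      (fun i hi => lt_trans (hc i (by omega)).2.1
        (lt_of_le_of_lt (mono (i + 1) (by omega) (i + 1) le_rfl) (hc (i + 1) (by omega)).1))
      (fun i hi => (hc i hi).2.2)
      (hdF.continuousOn.mono hV)
      (hdF.mono (fun y hy => hV (Ioo_subset_Icc_self hy)))
    refine ⟨ξ, hV (Ioo_subset_Icc_self hξ), ?_⟩
    rw [iteratedDeriv_succ', h0]

lemma my_select (γ : ℝ) (hγ : 0 < γ) : ∀ (k : ℕ) (S : Set ℝ), BddBelow S →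
    (k : ENNReal) * ENNReal.ofReal γ < volume S →
    ∃ x : ℕ → ℝ, (∀ i ≤ k, x i ∈ S) ∧ ∀ i < k, x i + γ ≤ x (i + 1) := by
  intro k
  induction k with
  | zero =>
    intro S _ hvol
    have hS : S.Nonempty := by
      refine nonempty_of_measure_ne_zero (μ := volume) ?_
      intro h0
      rw [h0] at hvol
      exact absurd hvol (by simp)
    obtain ⟨z, hz⟩ := hS
    exact ⟨fun _ => z, fun _ _ => hz, fun i hi => by omega⟩
  | succ k ih =>
    intro S hbdd hvol
    have hγ' : ENNReal.ofReal γ ≠ ⊤ := ENNReal.ofReal_ne_top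
    have hγpos : (0 : ENNReal) < ENNReal.ofReal γ := ENNReal.ofReal_pos.mpr hγ
    have hS : S.Nonempty := by
      refine nonempty_of_measure_ne_zero (μ := volume) ?_
      intro h0
      rw [h0] at hvol
      exact absurd hvol (by simp)
    set a := sInf S with ha
    have hsub : S \ Ioi (a + γ) ⊆ Icc a (a + γ) := by
      intro y hy
      exact ⟨csInf_le hbdd hy.1, by simpa using hy.2⟩
    have h1 : volume (S \ Ioi (a + γ)) ≤ ENNReal.ofReal γ := by
      calc volume (S \ Ioi (a + γ)) ≤ volume (Icc a (a + γ)) := measure_mono hsub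
        _ = ENNReal.ofReal γ := by rw [Real.volume_Icc]; ring_nf
    have h2 : volume S ≤ volume (S ∩ Ioi (a + γ)) + volume (S \ Ioi (a + γ)) :=
      measure_le_inter_add_diff volume S (Ioi (a + γ))
    have h3 : (k : ENNReal) * ENNReal.ofReal γ < volume (S ∩ Ioi (a + γ)) := by
      have hlt : (k : ENNReal) * ENNReal.ofReal γ + ENNReal.ofReal γ
          < volume (S ∩ Ioi (a + γ)) + ENNReal.ofReal γ := by
        calc (k : ENNReal) * ENNReal.ofReal γ + ENNReal.ofReal γ
            = ((k : ℕ) + 1 : ENNReal) * ENNReal.ofReal γ := by ring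
          _ = ((k + 1 : ℕ) : ENNReal) * ENNReal.ofReal γ := by push_cast; ring
          _ < volume S := hvol
          _ ≤ volume (S ∩ Ioi (a + γ)) + volume (S \ Ioi (a + γ)) := h2
          _ ≤ volume (S ∩ Ioi (a + γ)) + ENNReal.ofReal γ := add_le_add le_rfl h1
      exact (ENNReal.add_lt_add_iff_right hγ').mp hlt
    obtain ⟨y, hy1, hy2⟩ := ih (S ∩ Ioi (a + γ)) (hbdd.mono inter_subset_left) h3
    have hy0 : a + γ < y 0 := (hy1 0 (by omega)).2
    obtain ⟨z, hz, hzlt⟩ := exists_lt_of_csInf_lt hS (show sInf S < y 0 - γ by linarith)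
    refine ⟨fun n => Nat.rec z (fun m _ => y m) n, ?_, ?_⟩
    · intro i hi
      cases i with
      | zero => exact hz
      | succ m => exact (hy1 m (by omega)).1
    · intro i hi
      cases i with
      | zero => simpa using le_of_lt (by linarith : z + γ < y 0)
      | succ m => exact hy2 m (by omega)
lemma my_core (k : ℕ) (hk : 1 ≤ k) (J : Set ℝ) (hJ : J.OrdConnected) (g : ℝ → ℝ)
    (hg : ContDiffOn ℝ k g J) (d h γ : ℝ) (hd : 0 < d) (hh : 0 < h) (hγ : 0 < γ)
    (hders : ∀ τ ∈ J, d ≤ |iteratedDerivWithin k g J τ|)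
    (x : ℕ → ℝ) (hxJ : ∀ i ≤ k, x i ∈ J) (hxh : ∀ i ≤ k, |g (x i)| < h)
    (hgap : ∀ i < k, x i + γ ≤ x (i + 1)) :
    d * γ ^ k ≤ (Nat.factorial (k + 1) : ℝ) * h := by
  classical
  have mono := my_gap_mono x γ k hγ.le hgap
  have hlt : ∀ i j, i < j → j ≤ k → x i < x j := fun i j hij hj => by
    have := mono j hj i hij; linarith
  have hsep : ∀ i j, i ≤ k → j ≤ k → i ≠ j → γ ≤ |x i - x j| := by
    intro i j hi hj hij
    rcases lt_or_gt_of_ne hij with hlt' | hlt'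
    · rw [abs_sub_comm, abs_of_nonneg (by linarith [hlt i j hlt' hj])]
      linarith [mono j hj i hlt']
    · rw [abs_of_nonneg (by linarith [hlt j i hlt' hi])]
      linarith [mono i hi j hlt']
  set s : Finset ℕ := Finset.range (k + 1) with hs
  have hmem : ∀ i, i ∈ s ↔ i ≤ k := by intro i; simp [hs, Finset.mem_range]
  have hinj : Set.InjOn x ↑s := by
    intro i hi j hj hxy
    by_contra hne
    have := hsep i j ((hmem i).1 hi) ((hmem j).1 hj) hne
    rw [hxy, sub_self, abs_zero] at this
    linarith
  set P : Polynomial ℝ := Lagrange.interpolate s x (fun i => g (x i)) with hP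
  have hPdeg : P.natDegree ≤ k := by
    by_cases h0 : P = 0
    · simp [h0]
    · have := Lagrange.degree_interpolate_lt (r := fun i => g (x i)) hinj
      have hcard : s.card = k + 1 := by simp [hs]
      rw [hcard] at this
      have := (Polynomial.natDegree_lt_iff_degree_lt h0).mpr this
      omega
  -- coefficient computation
  have hbasis : ∀ i ∈ s, (Lagrange.basis s x i).coeff k
      = ∏ j ∈ s.erase i, (x i - x j)⁻¹ := by
    intro i hi
    have hcard : (s.erase i).card = k := by
      rw [Finset.card_erase_of_mem hi]; simp [hs]
    have hdeg1 : ∀ j ∈ s.erase i, (Lagrange.basisDivisor (x i) (x j)).natDegree ≤ 1 := by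
      intro j _
      by_cases hij : x i = x j
      · rw [hij]; simp [Lagrange.natDegree_basisDivisor_self]
      · exact le_of_eq (Lagrange.natDegree_basisDivisor_of_ne hij)
    have := Polynomial.coeff_prod_of_natDegree_le
      (s := s.erase i) (fun j => Lagrange.basisDivisor (x i) (x j)) 1 hdeg1
    rw [hcard, mul_one] at this
    rw [Lagrange.basis, this]
    refine Finset.prod_congr rfl fun j _ => ?_
    simp [Lagrange.basisDivisor, Polynomial.coeff_C_mul, Polynomial.coeff_sub, Polynomial.coeff_C]
  have hcoeff : P.coeff k = ∑ i ∈ s, g (x i) * ∏ j ∈ s.erase i, (x i - x j)⁻¹ := by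
    rw [hP, Lagrange.interpolate_apply, Polynomial.finset_sum_coeff]
    refine Finset.sum_congr rfl fun i hi => ?_
    rw [Polynomial.coeff_C_mul, hbasis i hi]
  have hprod_bound : ∀ i ∈ s, |∏ j ∈ s.erase i, (x i - x j)⁻¹| ≤ (γ ^ k)⁻¹ := by
    intro i hi
    have hcard : (s.erase i).card = k := by
      rw [Finset.card_erase_of_mem hi]; simp [hs]
    rw [Finset.abs_prod]
    have : ∀ j ∈ s.erase i, |(x i - x j)⁻¹| ≤ γ⁻¹ := by
      intro j hj
      have hji : j ≠ i := (Finset.mem_erase.mp hj).1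
      have hjs : j ∈ s := (Finset.mem_erase.mp hj).2
      rw [abs_inv]
      exact inv_anti₀ hγ (hsep i j ((hmem i).1 hi) ((hmem j).1 hjs) (Ne.symm hji))
    calc ∏ j ∈ s.erase i, |(x i - x j)⁻¹| ≤ ∏ j ∈ s.erase i, γ⁻¹ :=
          Finset.prod_le_prod (fun j _ => abs_nonneg _) this
      _ = (γ⁻¹) ^ k := by rw [Finset.prod_const, hcard]
      _ = (γ ^ k)⁻¹ := by rw [inv_pow]
  have hcoeff_bound : |P.coeff k| ≤ (k + 1 : ℝ) * h * (γ ^ k)⁻¹ := by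
    rw [hcoeff]
    have step1 : |∑ i ∈ s, g (x i) * ∏ j ∈ s.erase i, (x i - x j)⁻¹|
        ≤ ∑ i ∈ s, |g (x i) * ∏ j ∈ s.erase i, (x i - x j)⁻¹| := Finset.abs_sum_le_sum_abs _ _
    have step2 : ∑ i ∈ s, |g (x i) * ∏ j ∈ s.erase i, (x i - x j)⁻¹|
        ≤ ∑ _i ∈ s, h * (γ ^ k)⁻¹ := by
      refine Finset.sum_le_sum fun i hi => ?_
      rw [abs_mul]
      exact mul_le_mul (hxh i ((hmem i).1 hi)).le (hprod_bound i hi) (abs_nonneg _) hh.le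
    have step3 : ∑ _i ∈ s, h * (γ ^ k)⁻¹ = (k + 1 : ℝ) * h * (γ ^ k)⁻¹ := by
      rw [Finset.sum_const, hs, Finset.card_range]
      push_cast
      ring
    linarith
  -- Rolle setup
  set F : ℝ → ℝ := fun t => g t - P.eval t with hF
  have hFz : ∀ i ≤ k, F (x i) = 0 := by
    intro i hi
    have := Lagrange.eval_interpolate_at_node (r := fun i => g (x i)) hinj ((hmem i).2 hi)
    simp only [hF, hP, this, sub_self]
  have hab : x 0 < x k := hlt 0 k (by omega) le_rfl
  have hIccJ : Icc (x 0) (x k) ⊆ J := hJ.out (hxJ 0 (by omega)) (hxJ k le_rfl)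
  have hIooJ : Ioo (x 0) (x k) ⊆ J := fun y hy => hIccJ (Ioo_subset_Icc_self hy)
  have hxlt : ∀ i < k, x i < x (i + 1) := fun i hi => hlt i (i + 1) (by omega) (by omega)
  have hFc : ContinuousOn F (Icc (x 0) (x k)) :=
    (hg.continuousOn.mono hIccJ).sub ((my_contDiff_polyeval P (n := 0)).continuous.continuousOn)
  have hFd : ContDiffOn ℝ k F (Ioo (x 0) (x k)) :=
    (hg.mono hIooJ).sub ((my_contDiff_polyeval P (n := k)).contDiffOn)
  obtain ⟨ξ, hξ, hξ0⟩ := my_rolle k hk F x hxlt hFz hFc hFd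
  have hξJ : ξ ∈ J := hIooJ hξ
  -- derivative computations
  have hUopen : IsOpen (Ioo (x 0) (x k)) := isOpen_Ioo
  have hgU : ContDiffOn ℝ k g (Ioo (x 0) (x k)) := hg.mono hIooJ
  have hPU : ContDiffOn ℝ k (fun t => P.eval t) (Ioo (x 0) (x k)) :=
    (my_contDiff_polyeval P (n := k)).contDiffOn
  have hsplit : iteratedDerivWithin k F (Ioo (x 0) (x k)) ξ
      = iteratedDerivWithin k g (Ioo (x 0) (x k)) ξ
        - iteratedDerivWithin k (fun t => P.eval t) (Ioo (x 0) (x k)) ξ := by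
    have := iteratedDerivWithin_sub hξ hUopen.uniqueDiffOn (hgU ξ hξ) (hPU ξ hξ)
    exact this
  have e1 : iteratedDerivWithin k F (Ioo (x 0) (x k)) ξ = 0 := by
    rw [my_idw_of_isOpen hUopen hξ]; exact hξ0
  have e2 : iteratedDerivWithin k g (Ioo (x 0) (x k)) ξ = iteratedDeriv k g ξ :=
    my_idw_of_isOpen hUopen hξ
  have e3 : iteratedDerivWithin k (fun t => P.eval t) (Ioo (x 0) (x k)) ξ
      = (Nat.factorial k : ℝ) * P.coeff k := by
    rw [my_idw_of_isOpen hUopen hξ]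
    exact my_iteratedDeriv_poly_top P k hPdeg ξ
  have hgval : iteratedDeriv k g ξ = (Nat.factorial k : ℝ) * P.coeff k := by
    rw [e1, e2, e3] at hsplit
    linarith
  have hd_le : d ≤ (Nat.factorial k : ℝ) * |P.coeff k| := by
    have := hders ξ hξJ
    rw [my_idw_global hUopen hIooJ hξ, hgval, abs_mul, abs_of_nonneg
      (by positivity : (0:ℝ) ≤ (Nat.factorial k : ℝ))] at this
    exact this
  have hfin : d ≤ (Nat.factorial k : ℝ) * ((k + 1 : ℝ) * h * (γ ^ k)⁻¹) := by
    refine hd_le.trans ?_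
    exact mul_le_mul_of_nonneg_left hcoeff_bound (by positivity)
  have hγk : (0:ℝ) < γ ^ k := by positivity
  have : d * γ ^ k ≤ (Nat.factorial k : ℝ) * ((k + 1 : ℝ) * h) := by
    rw [mul_comm d (γ ^ k)]
    calc γ ^ k * d ≤ γ ^ k * ((Nat.factorial k : ℝ) * ((k + 1 : ℝ) * h * (γ ^ k)⁻¹)) :=
          mul_le_mul_of_nonneg_left hfin hγk.le
      _ = (Nat.factorial k : ℝ) * ((k + 1 : ℝ) * h) * (γ ^ k * (γ ^ k)⁻¹) := by ring
      _ = (Nat.factorial k : ℝ) * ((k + 1 : ℝ) * h) := by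
          rw [mul_inv_cancel₀ hγk.ne', mul_one]
  calc d * γ ^ k ≤ (Nat.factorial k : ℝ) * ((k + 1 : ℝ) * h) := this
    _ = (Nat.factorial (k + 1) : ℝ) * h := by
        rw [Nat.factorial_succ]
        push_cast
        ring

/-- If `g` is `p`-times differentiable on an interval `J ⊂ ℝ` with
`|g^{(p)}| ≥ d > 0` on `J`, then for every `h > 0` the Lebesgue measure of
`J_h = {τ ∈ J : |g(τ)| < h}` is at most `M h^(1/p)`, where
`M = 2(2 + 3 + ⋯ + p + d⁻¹)`. -/
theorem stmt_4 (p : ℕ) (hp : 1 ≤ p) (J : Set ℝ) (hJ : J.OrdConnected)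
    (g : ℝ → ℝ) (d : ℝ) (hd : 0 < d)
    (hg : ContDiffOn ℝ p g J)
    (hders : ∀ τ ∈ J, d ≤ |iteratedDerivWithin p g J τ|)
    (h : ℝ) (hh : 0 < h) :
    volume {τ : ℝ | τ ∈ J ∧ |g τ| < h}
      ≤ ENNReal.ofReal (2 * ((∑ i ∈ Finset.Icc 2 p, (i : ℝ)) + d⁻¹) * h ^ ((1:ℝ)/p)) := by
  classical
  set S := {τ : ℝ | τ ∈ J ∧ |g τ| < h} with hSdef
  set Sig2 : ℝ := ∑ i ∈ Finset.Icc 2 p, (i : ℝ) with hSig2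
  set M : ℝ := 2 * (Sig2 + d⁻¹) with hM
  have hp0 : (0:ℝ) < p := by exact_mod_cast hp
  have hSignn : 0 ≤ Sig2 := Finset.sum_nonneg fun i _ => by positivity
  have hMpos : 0 < M := by
    have : 0 < d⁻¹ := by positivity
    rw [hM]; nlinarith
  have hrp : (0:ℝ) < h ^ ((1:ℝ)/p) := Real.rpow_pos_of_pos hh _
  set Q : ℝ := M * h ^ ((1:ℝ)/p) with hQ
  have hQpos : 0 < Q := mul_pos hMpos hrp
  -- AM-GM: ((p+1)!/d)^(1/p) ≤ Q / (p * h^(1/p)) * ... precisely: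
  have hAMGM : ((Nat.factorial (p + 1) : ℝ) / d) ^ ((1:ℝ)/p) ≤ (2 * Sig2 + 2 / d) / p := by
    set z : ℕ → ℝ := fun i => if i = 1 then 2 / d else 2 * i with hz
    have hznn : ∀ i ∈ Finset.Icc 1 p, (0:ℝ) ≤ z i := by
      intro i _
      by_cases hi : i = 1 <;> simp [hz, hi] <;> positivity
    have hcard : (Finset.Icc 1 p).card = p := by
      rw [Nat.card_Icc]; omega
    have hins : Finset.Icc 1 p = insert 1 (Finset.Icc 2 p) := by
      ext i; simp [Finset.mem_Icc, Finset.mem_insert]; omega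
    have h1notin : (1:ℕ) ∉ Finset.Icc 2 p := by simp
    have hprodz : ∏ i ∈ Finset.Icc 1 p, z i = 2 ^ p * (Nat.factorial p : ℝ) / d := by
      rw [hins, Finset.prod_insert h1notin]
      have hz1 : z 1 = 2 / d := by simp [hz]
      have hzo : ∀ i ∈ Finset.Icc 2 p, z i = 2 * i := by
        intro i hi
        have : i ≠ 1 := by simp [Finset.mem_Icc] at hi; omega
        simp [hz, this]
      rw [hz1, Finset.prod_congr rfl hzo, Finset.prod_mul_distrib, Finset.prod_const]
      have hcard2 : (Finset.Icc 2 p).card = p - 1 := by rw [Nat.card_Icc]; omega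
      have hprodid : ∏ i ∈ Finset.Icc 2 p, (i:ℝ) = (Nat.factorial p : ℝ) := by
        have : ∏ i ∈ Finset.Icc 1 p, (i:ℝ) = (Nat.factorial p : ℝ) := by
          rw [← Nat.cast_prod]
          norm_cast
          rw [← Finset.Ico_add_one_right_eq_Icc]
          exact Finset.prod_Ico_id_eq_factorial p
        rw [hins, Finset.prod_insert h1notin] at this
        simpa using this
      rw [hcard2, hprodid]
      have h2p : (2:ℝ) ^ (p - 1) * 2 = 2 ^ p := by
        rw [← pow_succ]
        congr 1
        omega
      rw [← h2p]
      ring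
    have hsumz : ∑ i ∈ Finset.Icc 1 p, z i = 2 / d + 2 * Sig2 := by
      rw [hins, Finset.sum_insert h1notin]
      have hz1 : z 1 = 2 / d := by simp [hz]
      have hzo : ∀ i ∈ Finset.Icc 2 p, z i = 2 * i := by
        intro i hi
        have : i ≠ 1 := by simp [Finset.mem_Icc] at hi; omega
        simp [hz, this]
      rw [hz1, Finset.sum_congr rfl hzo, ← Finset.mul_sum, hSig2]
    have hw : ∀ i ∈ Finset.Icc 1 p, (0:ℝ) ≤ 1 / p := fun i _ => by positivity
    have hw' : ∑ _i ∈ Finset.Icc 1 p, (1:ℝ) / p = 1 := by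
      rw [Finset.sum_const, hcard, nsmul_eq_mul]
      field_simp
    have hgm := Real.geom_mean_le_arith_mean_weighted (Finset.Icc 1 p)
      (fun _ => (1:ℝ)/p) z hw hw' hznn
    rw [Real.finset_prod_rpow _ _ hznn _] at hgm
    have hsum_eq : ∑ i ∈ Finset.Icc 1 p, (1:ℝ)/p * z i = (2 * Sig2 + 2/d) / p := by
      rw [← Finset.mul_sum, hsumz]
      ring
    rw [hsum_eq] at hgm
    refine le_trans ?_ hgm
    refine Real.rpow_le_rpow (by positivity) ?_ (by positivity)
    rw [hprodz]
    have hfact : (Nat.factorial (p + 1) : ℝ) ≤ 2 ^ p * (Nat.factorial p : ℝ) := by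
      rw [Nat.factorial_succ]
      push_cast
      have h2p : (p:ℝ) + 1 ≤ 2 ^ p := by
        have := Nat.lt_two_pow_self (n := p)
        exact_mod_cast this
      nlinarith [(by exact_mod_cast Nat.factorial_pos p : (0:ℝ) < (Nat.factorial p : ℝ))]
    gcongr
  -- define A and show A ≤ Q / p
  set A : ℝ := ((Nat.factorial (p + 1) : ℝ) * h / d) ^ ((1:ℝ)/p) with hA
  have hA_le : A ≤ Q / p := by
    have hsplit : A = ((Nat.factorial (p + 1) : ℝ) / d) ^ ((1:ℝ)/p) * h ^ ((1:ℝ)/p) := by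
      rw [hA, ← Real.mul_rpow (by positivity) hh.le]
      congr 1
      ring
    rw [hsplit, hQ]
    have : ((Nat.factorial (p + 1) : ℝ) / d) ^ ((1:ℝ)/p) * h ^ ((1:ℝ)/p)
        ≤ (2 * Sig2 + 2 / d) / p * h ^ ((1:ℝ)/p) :=
      mul_le_mul_of_nonneg_right hAMGM hrp.le
    refine this.trans (le_of_eq ?_)
    have hMeq : 2 * Sig2 + 2 / d = M := by
      rw [hM, div_eq_mul_inv]
      ring
    rw [hMeq]
    ring
  -- contradiction setup
  by_contra hcon
  push_neg at hcon
  -- find γ with Q / p < γ and p * ofReal γ < volume S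
  have hγexists : ∃ γ : ℝ, Q / p < γ ∧ (p : ENNReal) * ENNReal.ofReal γ < volume S := by
    rcases eq_or_ne (volume S) ⊤ with htop | htop
    · refine ⟨Q / p + 1, by linarith, ?_⟩
      rw [htop]
      exact ENNReal.mul_lt_top (by simp) ENNReal.ofReal_lt_top
    · set m : ℝ := (volume S).toReal with hm
      have hvol_eq : volume S = ENNReal.ofReal m := (ENNReal.ofReal_toReal htop).symm
      have hQm : Q < m := by
        rw [hvol_eq] at hcon
        have := (ENNReal.ofReal_lt_ofReal_iff_of_nonneg hQpos.le).mp hcon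
        exact this
      refine ⟨(Q + m) / (2 * p), ?_, ?_⟩
      · rw [div_lt_div_iff₀ hp0 (by positivity)]
        nlinarith
      · have hcalc : (p : ENNReal) * ENNReal.ofReal ((Q + m) / (2 * p))
            = ENNReal.ofReal ((Q + m) / 2) := by
          rw [← ENNReal.ofReal_natCast p, ← ENNReal.ofReal_mul (by positivity)]
          congr 1
          field_simp
        rw [hcalc, hvol_eq]
        refine (ENNReal.ofReal_lt_ofReal_iff (by linarith)).mpr ?_
        linarith
  obtain ⟨γ, hγgt, hγvol⟩ := hγexists
  have hγpos : 0 < γ := lt_trans (by positivity) hγgt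
  -- localize to a bounded set
  have hunion : S = ⋃ n : ℕ, S ∩ Icc (-(n:ℝ)) n := by
    ext y
    simp only [mem_iUnion, mem_inter_iff, mem_Icc]
    constructor
    · intro hy
      obtain ⟨n, hn⟩ := exists_nat_ge |y|
      exact ⟨n, hy, by cases abs_le.mp hn with | intro h1 h2 => constructor <;> linarith⟩
    · rintro ⟨n, hy, -⟩; exact hy
  have hmono : Monotone (fun n : ℕ => S ∩ Icc (-(n:ℝ)) n) := by
    intro a b hab
    refine inter_subset_inter le_rfl (Icc_subset_Icc ?_ ?_) <;>
      simp only [neg_le_neg_iff, Nat.cast_le] <;> exact_mod_cast hab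
  have hsup : volume S = ⨆ n : ℕ, volume (S ∩ Icc (-(n:ℝ)) n) := by
    conv_lhs => rw [hunion]
    exact hmono.measure_iUnion
  rw [hsup] at hγvol
  obtain ⟨n, hn⟩ := lt_iSup_iff.mp hγvol
  set T := S ∩ Icc (-(n:ℝ)) n with hT
  have hTbdd : BddBelow T := (bddBelow_Icc).mono inter_subset_right
  obtain ⟨x, hxT, hgap⟩ := my_select γ hγpos p T hTbdd hn
  have hxS : ∀ i ≤ p, x i ∈ S := fun i hi => (hxT i hi).1
  have hcore := my_core p hp J hJ g hg d h γ hd hh hγpos hders x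
    (fun i hi => (hxS i hi).1) (fun i hi => (hxS i hi).2) hgap
  -- γ^p ≤ (p+1)! h / d hence γ ≤ A
  have hγp : γ ^ p ≤ (Nat.factorial (p + 1) : ℝ) * h / d := by
    rw [le_div_iff₀ hd]
    linarith [hcore]
  have hγA : γ ≤ A := by
    have h1 : γ = (γ ^ p) ^ ((1:ℝ)/p) := by
      rw [← Real.rpow_natCast γ p, ← Real.rpow_mul hγpos.le]
      rw [mul_one_div, div_self (by positivity : (p:ℝ) ≠ 0), Real.rpow_one]
    rw [h1, hA]
    exact Real.rpow_le_rpow (by positivity) hγp (by positivity)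
  linarith [hA_le]
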